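/- Let p be a prime, n ≥ 0, and ξ = I₄ + e₄₂ ∈ GL₄(ℤ_p). Let P ⊆ GL₄ be the (2,2)-parabolic with Levi projection κ : P → GL₂ × GL₂ (upper-left and lower-right blocks). Then κ(P(ℚ_p) ∩ ξ K_p^n ξ⁻¹) = K_p(n) × GL₂(ℤ_p), where K_p(n) ⊆ GL₂(ℤ_p) is the subgroup of matrices whose bottom row is congruent to (0,1) mod p^n, and K_p^n ⊆ GL₄(ℤ_p) is the mirahoric subgroup of matrices with bottom row ≡ (0,0,0,1) mod p^n. -/
import Mathlib


open Matrix

/-- The `(2,2)`-parabolic `P(ℚ_p) ⊆ GL₄(ℚ_p)`. -/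
def parabolicP (p : ℕ) [Fact p.Prime] : Set (Matrix (Fin 4) (Fin 4) ℚ_[p]) :=
  {g | IsUnit g.det ∧ g 2 0 = 0 ∧ g 2 1 = 0 ∧ g 3 0 = 0 ∧ g 3 1 = 0}

/-- The mirahoric subgroup `K_p^n ⊆ GL₄(ℤ_p)`. -/
def mirahoric (p : ℕ) [Fact p.Prime] (n : ℕ) : Set (Matrix (Fin 4) (Fin 4) ℚ_[p]) :=
  {g | (∀ i j, ‖g i j‖ ≤ 1) ∧ ‖g.det‖ = 1 ∧
    ‖g 3 0‖ ≤ (p : ℝ) ^ (-(n : ℤ)) ∧ ‖g 3 1‖ ≤ (p : ℝ) ^ (-(n : ℤ)) ∧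
    ‖g 3 2‖ ≤ (p : ℝ) ^ (-(n : ℤ)) ∧ ‖g 3 3 - 1‖ ≤ (p : ℝ) ^ (-(n : ℤ))}

/-- Upper-left `2×2` block. -/
def ulBlock (p : ℕ) [Fact p.Prime] (g : Matrix (Fin 4) (Fin 4) ℚ_[p]) :
    Matrix (Fin 2) (Fin 2) ℚ_[p] :=
  fun i j => g ⟨i.1, by omega⟩ ⟨j.1, by omega⟩

/-- Lower-right `2×2` block. -/
def lrBlock (p : ℕ) [Fact p.Prime] (g : Matrix (Fin 4) (Fin 4) ℚ_[p]) :
    Matrix (Fin 2) (Fin 2) ℚ_[p] :=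
  fun i j => g ⟨i.1 + 2, by omega⟩ ⟨j.1 + 2, by omega⟩

/-- `K_p(n) ⊆ GL₂(ℤ_p)`: bottom row congruent to `(0,1)` mod `p^n`. -/
def mirahoric2 (p : ℕ) [Fact p.Prime] (n : ℕ) : Set (Matrix (Fin 2) (Fin 2) ℚ_[p]) :=
  {g | (∀ i j, ‖g i j‖ ≤ 1) ∧ ‖g.det‖ = 1 ∧
    ‖g 1 0‖ ≤ (p : ℝ) ^ (-(n : ℤ)) ∧ ‖g 1 1 - 1‖ ≤ (p : ℝ) ^ (-(n : ℤ))}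

/-- `GL₂(ℤ_p)` as a set of `2×2` matrices over `ℚ_p`. -/
def GL2Zp (p : ℕ) [Fact p.Prime] : Set (Matrix (Fin 2) (Fin 2) ℚ_[p]) :=
  {g | (∀ i j, ‖g i j‖ ≤ 1) ∧ ‖g.det‖ = 1}

variable {p : ℕ} [Fact p.Prime]

lemma pnorm_add {a b : ℚ_[p]} {c : ℝ} (ha : ‖a‖ ≤ c) (hb : ‖b‖ ≤ c) : ‖a + b‖ ≤ c :=
  le_trans (Padic.nonarchimedean a b) (max_le ha hb)

lemma pnorm_sub {a b : ℚ_[p]} {c : ℝ} (ha : ‖a‖ ≤ c) (hb : ‖b‖ ≤ c) : ‖a - b‖ ≤ c := by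
  rw [sub_eq_add_neg]; exact pnorm_add ha (by simpa using hb)

lemma xi_inv : (!![1, 0, 0, 0; 0, 1, 0, 0; 0, 0, 1, 0; 0, 1, 0, 1] : Matrix (Fin 4) (Fin 4) ℚ_[p])⁻¹ =
    !![1, 0, 0, 0; 0, 1, 0, 0; 0, 0, 1, 0; 0, -1, 0, 1] := by
  apply Matrix.inv_eq_right_inv
  ext i j
  fin_cases i <;> fin_cases j <;> simp [Matrix.mul_apply, Fin.sum_univ_four, Matrix.vecHead, Matrix.vecTail]

lemma ul_apply (g : Matrix (Fin 4) (Fin 4) ℚ_[p]) :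
    ulBlock p g = !![g 0 0, g 0 1; g 1 0, g 1 1] := by
  ext i j; fin_cases i <;> fin_cases j <;> rfl

lemma lr_apply (g : Matrix (Fin 4) (Fin 4) ℚ_[p]) :
    lrBlock p g = !![g 2 2, g 2 3; g 3 2, g 3 3] := by
  ext i j; fin_cases i <;> fin_cases j <;> rfl

lemma conj_eq (k : Matrix (Fin 4) (Fin 4) ℚ_[p]) :
    !![1, 0, 0, 0; 0, 1, 0, 0; 0, 0, 1, 0; 0, 1, 0, 1] * k *
      (!![(1:ℚ_[p]), 0, 0, 0; 0, 1, 0, 0; 0, 0, 1, 0; 0, 1, 0, 1])⁻¹ =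
    !![k 0 0, k 0 1 - k 0 3, k 0 2, k 0 3;
       k 1 0, k 1 1 - k 1 3, k 1 2, k 1 3;
       k 2 0, k 2 1 - k 2 3, k 2 2, k 2 3;
       k 3 0 + k 1 0, (k 3 1 + k 1 1) - (k 3 3 + k 1 3), k 3 2 + k 1 2, k 3 3 + k 1 3] := by
  rw [xi_inv]
  ext i j
  fin_cases i <;> fin_cases j <;>
    simp [Matrix.mul_apply, Matrix.vecMul, dotProduct, Fin.sum_univ_four,
      Matrix.vecHead, Matrix.vecTail] <;> ring

lemma det4 (g : Matrix (Fin 4) (Fin 4) ℚ_[p]) (h20 : g 2 0 = 0) (h21 : g 2 1 = 0)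
    (h30 : g 3 0 = 0) (h31 : g 3 1 = 0) :
    g.det = (ulBlock p g).det * (lrBlock p g).det := by
  rw [ul_apply, lr_apply, Matrix.det_fin_two_of, Matrix.det_fin_two_of]
  simp [Matrix.det_succ_row_zero, Fin.sum_univ_succ, h20, h21, h30, h31,
    show (Fin.succ 2 : Fin 4) = 3 from by decide, show (Fin.succAbove 2 2 : Fin 4) = 3 from by decide,
    show (Fin.succAbove 1 2 : Fin 4) = 3 from by decide, show (Fin.castSucc 2 : Fin 4) = 2 from by decide]
  ring



lemma pnorm_mul {a b : ℚ_[p]} (ha : ‖a‖ ≤ 1) (hb : ‖b‖ ≤ 1) : ‖a * b‖ ≤ 1 := by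
  rw [norm_mul]
  calc ‖a‖ * ‖b‖ ≤ 1 * 1 := mul_le_mul ha hb (norm_nonneg b) zero_le_one
  _ = 1 := by ring

lemma det_xi : (!![1, 0, 0, 0; 0, 1, 0, 0; 0, 0, 1, 0; 0, 1, 0, 1] :
    Matrix (Fin 4) (Fin 4) ℚ_[p]).det = 1 := by
  simp [Matrix.det_succ_row_zero, Fin.sum_univ_succ]

lemma det_xi_inv : (!![1, 0, 0, 0; 0, 1, 0, 0; 0, 0, 1, 0; 0, -1, 0, 1] :
    Matrix (Fin 4) (Fin 4) ℚ_[p]).det = 1 := by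
  simp [Matrix.det_succ_row_zero, Fin.sum_univ_succ]

set_option maxHeartbeats 2000000 in
/-- with `ξ = I₄ + e₄₂`, the Levi projection of
`P(ℚ_p) ∩ ξ K_p^n ξ⁻¹` is `K_p(n) × GL₂(ℤ_p)`. -/

theorem levi_projection_xi0 (p : ℕ) [Fact p.Prime] (n : ℕ) :
    (fun g => (ulBlock p g, lrBlock p g)) ''
        (parabolicP p ∩
          {g | ∃ k ∈ mirahoric p n,
            g = !![1, 0, 0, 0; 0, 1, 0, 0; 0, 0, 1, 0; 0, 1, 0, 1] * k *
              (!![1, 0, 0, 0; 0, 1, 0, 0; 0, 0, 1, 0; 0, 1, 0, 1])⁻¹}) =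
      (mirahoric2 p n) ×ˢ (GL2Zp p) := by
  have hfp : Fact p.Prime := inferInstance
  have hp0 : (0:ℝ) ≤ (p : ℝ) ^ (-(n : ℤ)) := by
    have hp : (0:ℝ) < p := by exact_mod_cast hfp.out.pos
    positivity
  have h1le : ‖(1 : ℚ_[p])‖ ≤ 1 := by simp
  ext x
  obtain ⟨A, D⟩ := x
  simp only [Set.mem_image, Set.mem_inter_iff, Set.mem_setOf_eq, Set.mem_prod, Prod.mk.injEq,
    parabolicP, mirahoric, mirahoric2, GL2Zp]
  constructor
  · rintro ⟨g, ⟨⟨-, h20, h21, h30, h31⟩, k, ⟨hint, hkdet, hk30, hk31, hk32, hk33⟩, hg⟩, hul, hlr⟩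
    have hMdet : g.det = k.det := by
      rw [hg, xi_inv, Matrix.det_mul, Matrix.det_mul, det_xi, det_xi_inv, one_mul, mul_one]
    have hD4 := det4 g h20 h21 h30 h31
    rw [conj_eq] at hg
    subst hg
    simp only [ul_apply, lr_apply, Matrix.cons_val_zero, Matrix.cons_val_one,
      Matrix.cons_val_two, Matrix.cons_val_three, Matrix.cons_val_succ, Matrix.head_cons,
      Matrix.vecHead, Matrix.vecTail, Matrix.of_apply, Matrix.cons_val', Matrix.empty_val',
      Matrix.cons_val_fin_one, Function.comp_apply, Function.comp] at h20 h21 h30 h31 hul hlr hD4 ⊢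
    subst hul hlr
    have hdA : ‖(!![k 0 0, k 0 1 - k 0 3; k 1 0, k 1 1 - k 1 3] :
        Matrix (Fin 2) (Fin 2) ℚ_[p]).det‖ ≤ 1 := by
      rw [Matrix.det_fin_two_of]
      exact pnorm_sub (pnorm_mul (hint 0 0) (pnorm_sub (hint 1 1) (hint 1 3)))
        (pnorm_mul (pnorm_sub (hint 0 1) (hint 0 3)) (hint 1 0))
    have hdD : ‖(!![k 2 2, k 2 3; k 3 2 + k 1 2, k 3 3 + k 1 3] :
        Matrix (Fin 2) (Fin 2) ℚ_[p]).det‖ ≤ 1 := by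
      rw [Matrix.det_fin_two_of]
      exact pnorm_sub (pnorm_mul (hint 2 2) (pnorm_add (hint 3 3) (hint 1 3)))
        (pnorm_mul (hint 2 3) (pnorm_add (hint 3 2) (hint 1 2)))
    have hprod : ‖(!![k 0 0, k 0 1 - k 0 3; k 1 0, k 1 1 - k 1 3] :
          Matrix (Fin 2) (Fin 2) ℚ_[p]).det‖ *
        ‖(!![k 2 2, k 2 3; k 3 2 + k 1 2, k 3 3 + k 1 3] :
          Matrix (Fin 2) (Fin 2) ℚ_[p]).det‖ = 1 := by
      rw [← norm_mul, ← hD4, hMdet, hkdet]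
    refine ⟨⟨?_, ?_, ?_, ?_⟩, ?_, ?_⟩
    · intro i j
      fin_cases i <;> fin_cases j <;>
        simp only [Matrix.cons_val', Matrix.cons_val_zero, Matrix.cons_val_one,
          Matrix.head_cons, Matrix.head_fin_const, Matrix.empty_val',
          Matrix.cons_val_fin_one, Matrix.of_apply, Fin.zero_eta, Fin.mk_one] <;>
        first
          | exact hint 0 0
          | exact pnorm_sub (hint 0 1) (hint 0 3)
          | exact hint 1 0
          | exact pnorm_sub (hint 1 1) (hint 1 3)
    · refine le_antisymm hdA ?_
      have := mul_le_mul_of_nonneg_left hdD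
        (norm_nonneg ((!![k 0 0, k 0 1 - k 0 3; k 1 0, k 1 1 - k 1 3] :
          Matrix (Fin 2) (Fin 2) ℚ_[p]).det))
      rw [mul_one] at this
      linarith [hprod]
    · show ‖k 1 0‖ ≤ _
      rw [show k 1 0 = -(k 3 0) from by linear_combination h30, norm_neg]
      exact hk30
    · show ‖k 1 1 - k 1 3 - 1‖ ≤ _
      rw [show k 1 1 - k 1 3 - 1 = (k 3 3 - 1) - k 3 1 from by linear_combination h31]
      exact pnorm_sub hk33 hk31
    · intro i j
      fin_cases i <;> fin_cases j <;>
        simp only [Matrix.cons_val', Matrix.cons_val_zero, Matrix.cons_val_one,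
          Matrix.head_cons, Matrix.head_fin_const, Matrix.empty_val',
          Matrix.cons_val_fin_one, Matrix.of_apply, Fin.zero_eta, Fin.mk_one] <;>
        first
          | exact hint 2 2
          | exact hint 2 3
          | exact pnorm_add (hint 3 2) (hint 1 2)
          | exact pnorm_add (hint 3 3) (hint 1 3)
    · refine le_antisymm hdD ?_
      have := mul_le_mul_of_nonneg_right hdA
        (norm_nonneg ((!![k 2 2, k 2 3; k 3 2 + k 1 2, k 3 3 + k 1 3] :
          Matrix (Fin 2) (Fin 2) ℚ_[p]).det))
      rw [one_mul] at this
      linarith [hprod]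
  · rintro ⟨⟨hA, hAdet, hA10, hA11⟩, hD, hDdet⟩
    have hulg : ulBlock p (!![A 0 0, A 0 1, 0, 0; A 1 0, A 1 1, D 1 0, D 1 1 - 1;
        0, 0, D 0 0, D 0 1; 0, 0, D 1 0, D 1 1] : Matrix (Fin 4) (Fin 4) ℚ_[p]) = A := by
      ext i j
      rw [ul_apply]
      fin_cases i <;> fin_cases j <;>
        simp [Matrix.cons_val_two, Matrix.cons_val_three, Matrix.vecHead, Matrix.vecTail]
    have hlrg : lrBlock p (!![A 0 0, A 0 1, 0, 0; A 1 0, A 1 1, D 1 0, D 1 1 - 1;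
        0, 0, D 0 0, D 0 1; 0, 0, D 1 0, D 1 1] : Matrix (Fin 4) (Fin 4) ℚ_[p]) = D := by
      ext i j
      rw [lr_apply]
      fin_cases i <;> fin_cases j <;>
        simp [Matrix.cons_val_two, Matrix.cons_val_three, Matrix.vecHead, Matrix.vecTail]
    have hconj : !![1, 0, 0, 0; 0, 1, 0, 0; 0, 0, 1, 0; 0, 1, 0, 1] *
        (!![A 0 0, A 0 1, 0, 0;
            A 1 0, A 1 1 + D 1 1 - 1, D 1 0, D 1 1 - 1;
            0, D 0 1, D 0 0, D 0 1;
            -A 1 0, 1 - A 1 1, 0, 1] : Matrix (Fin 4) (Fin 4) ℚ_[p]) *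
          (!![(1:ℚ_[p]), 0, 0, 0; 0, 1, 0, 0; 0, 0, 1, 0; 0, 1, 0, 1])⁻¹ =
        !![A 0 0, A 0 1, 0, 0; A 1 0, A 1 1, D 1 0, D 1 1 - 1;
           0, 0, D 0 0, D 0 1; 0, 0, D 1 0, D 1 1] := by
      rw [conj_eq]
      ext i j
      fin_cases i <;> fin_cases j <;>
        simp [Matrix.cons_val_two, Matrix.cons_val_three, Matrix.vecHead, Matrix.vecTail] <;>
        ring
    have z20 : (!![A 0 0, A 0 1, 0, 0; A 1 0, A 1 1, D 1 0, D 1 1 - 1;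
        0, 0, D 0 0, D 0 1; 0, 0, D 1 0, D 1 1] : Matrix (Fin 4) (Fin 4) ℚ_[p]) 2 0 = 0 := by
      simp [Matrix.cons_val_two, Matrix.cons_val_three, Matrix.vecHead, Matrix.vecTail]
    have z21 : (!![A 0 0, A 0 1, 0, 0; A 1 0, A 1 1, D 1 0, D 1 1 - 1;
        0, 0, D 0 0, D 0 1; 0, 0, D 1 0, D 1 1] : Matrix (Fin 4) (Fin 4) ℚ_[p]) 2 1 = 0 := by
      simp [Matrix.cons_val_two, Matrix.cons_val_three, Matrix.vecHead, Matrix.vecTail]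
    have z30 : (!![A 0 0, A 0 1, 0, 0; A 1 0, A 1 1, D 1 0, D 1 1 - 1;
        0, 0, D 0 0, D 0 1; 0, 0, D 1 0, D 1 1] : Matrix (Fin 4) (Fin 4) ℚ_[p]) 3 0 = 0 := by
      simp [Matrix.cons_val_two, Matrix.cons_val_three, Matrix.vecHead, Matrix.vecTail]
    have z31 : (!![A 0 0, A 0 1, 0, 0; A 1 0, A 1 1, D 1 0, D 1 1 - 1;
        0, 0, D 0 0, D 0 1; 0, 0, D 1 0, D 1 1] : Matrix (Fin 4) (Fin 4) ℚ_[p]) 3 1 = 0 := by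
      simp [Matrix.cons_val_two, Matrix.cons_val_three, Matrix.vecHead, Matrix.vecTail]
    have hgdet : (!![A 0 0, A 0 1, 0, 0; A 1 0, A 1 1, D 1 0, D 1 1 - 1;
        0, 0, D 0 0, D 0 1; 0, 0, D 1 0, D 1 1] : Matrix (Fin 4) (Fin 4) ℚ_[p]).det =
        A.det * D.det := by
      rw [det4 _ z20 z21 z30 z31, hulg, hlrg]
    have hkdet : (!![A 0 0, A 0 1, 0, 0;
        A 1 0, A 1 1 + D 1 1 - 1, D 1 0, D 1 1 - 1;
        0, D 0 1, D 0 0, D 0 1;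
        -A 1 0, 1 - A 1 1, 0, 1] : Matrix (Fin 4) (Fin 4) ℚ_[p]).det = A.det * D.det := by
      have h := congrArg Matrix.det hconj
      rw [xi_inv, Matrix.det_mul, Matrix.det_mul, det_xi, det_xi_inv, one_mul, mul_one,
        hgdet] at h
      exact h
    refine ⟨!![A 0 0, A 0 1, 0, 0; A 1 0, A 1 1, D 1 0, D 1 1 - 1;
        0, 0, D 0 0, D 0 1; 0, 0, D 1 0, D 1 1],
      ⟨⟨?_, z20, z21, z30, z31⟩,
        !![A 0 0, A 0 1, 0, 0;
           A 1 0, A 1 1 + D 1 1 - 1, D 1 0, D 1 1 - 1;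
           0, D 0 1, D 0 0, D 0 1;
           -A 1 0, 1 - A 1 1, 0, 1], ⟨?_, ?_, ?_, ?_, ?_, ?_⟩, hconj.symm⟩, hulg, hlrg⟩
    · rw [hgdet]
      have hne : ‖A.det * D.det‖ = 1 := by rw [norm_mul, hAdet, hDdet, one_mul]
      refine isUnit_iff_ne_zero.mpr fun h => ?_
      rw [h, norm_zero] at hne
      exact zero_ne_one hne
    · intro i j
      fin_cases i <;> fin_cases j <;>
        simp [Matrix.cons_val_two, Matrix.cons_val_three, Matrix.vecHead, Matrix.vecTail] <;>
        first
          | exact hA 0 0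
          | exact hA 0 1
          | exact hA 1 0
          | exact hD 0 0
          | exact hD 0 1
          | exact hD 1 0
          | exact pnorm_sub (pnorm_add (hA 1 1) (hD 1 1)) h1le
          | exact pnorm_sub (hD 1 1) h1le
          | exact pnorm_sub h1le (hA 1 1)
          | exact le_trans (norm_neg (A 1 0) ▸ le_refl _) (hA 1 0)
    · rw [hkdet, norm_mul, hAdet, hDdet, one_mul]
    · show ‖-A 1 0‖ ≤ _
      rw [norm_neg]; exact hA10
    · show ‖1 - A 1 1‖ ≤ _
      rw [norm_sub_rev]; exact hA11
    · show ‖(0:ℚ_[p])‖ ≤ _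
      rw [norm_zero]; exact hp0
    · show ‖(1:ℚ_[p]) - 1‖ ≤ _
      simp [hp0]
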